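/- arXiv:1010.1842 — 2 statements merged into one kernel-verified Lean document; each statement's English description precedes it below -/
import Mathlib

section
/- One has ∫₀¹ (1−2t)·log(1−t)/(1−t+t²) dt = π²/18. -/
open intervalIntegral

open Real MeasureTheory Set Filter Topology

lemma alt_sq : HasSum (fun k : ℕ => (1:ℝ)/(2*k+1)^2 - 1/(2*k+2)^2) (Real.pi^2/12) := by
  have hz : HasSum (fun n : ℕ => (1:ℝ) / (n : ℝ) ^ 2) (Real.pi ^ 2 / 6) := hasSum_zeta_two
  have hg : HasSum (fun k : ℕ => (1:ℝ)/((k:ℝ)+1)^2) (Real.pi^2/6) := by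
    have h1 := (hasSum_nat_add_iff' (f := fun n : ℕ => (1:ℝ)/(n:ℝ)^2) 1).2 hz
    simpa using h1
  have ho : HasSum (fun k : ℕ => (1:ℝ)/(2*(k:ℝ)+2)^2) (Real.pi^2/24) := by
    have h2 := hg.mul_left (1/4 : ℝ)
    have heq : (fun k : ℕ => (1/4 : ℝ) * (1/((k:ℝ)+1)^2)) = fun k : ℕ => (1:ℝ)/(2*(k:ℝ)+2)^2 := by
      funext k
      have hk : ((k:ℝ)+1) ≠ 0 := by positivity
      field_simp
      ring
    rw [heq] at h2
    rw [show Real.pi^2/24 = 1/4 * (Real.pi^2/6) by ring]; exact h2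
  have hesum : Summable (fun k : ℕ => (1:ℝ)/(2*(k:ℝ)+1)^2) := by
    refine Summable.of_nonneg_of_le (fun k => by positivity) (fun k => ?_) hg.summable
    apply one_div_le_one_div_of_le (by positivity)
    nlinarith [Nat.cast_nonneg (α := ℝ) k]
  have he := hesum.hasSum
  have htot : HasSum (fun k : ℕ => (1:ℝ)/((k:ℝ)+1)^2)
      ((∑' k : ℕ, (1:ℝ)/(2*(k:ℝ)+1)^2) + Real.pi^2/24) := by
    refine HasSum.even_add_odd ?_ ?_
    · have heq : (fun k : ℕ => (1:ℝ)/(((2*k : ℕ):ℝ)+1)^2)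
          = fun k : ℕ => (1:ℝ)/(2*(k:ℝ)+1)^2 := by funext k; push_cast; ring_nf
      rw [heq]; exact he
    · have heq : (fun k : ℕ => (1:ℝ)/(((2*k+1 : ℕ):ℝ)+1)^2)
          = fun k : ℕ => (1:ℝ)/(2*(k:ℝ)+2)^2 := by funext k; push_cast; ring_nf
      rw [heq]; exact ho
  have hval : (∑' k : ℕ, (1:ℝ)/(2*(k:ℝ)+1)^2) = Real.pi^2/8 := by
    have := hg.unique htot
    linarith
  rw [hval] at he
  have hfin := he.sub ho
  have : Real.pi^2/8 - Real.pi^2/24 = Real.pi^2/12 := by ring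
  rw [this] at hfin
  exact hfin


lemma hasSum_F (p : ℕ) {u : ℝ} (h0 : 0 < u) (h1 : u < 1) :
    HasSum (fun k : ℕ => u^(2*(p+1)*k + p)/(2*(k:ℝ)+1) - u^(2*(p+1)*k + 2*p+1)/(2*(k:ℝ)+2))
      (Real.log (1 + u^(p+1)) / u) := by
  set x := u^(p+1) with hxdef
  have hx0 : 0 < x := pow_pos h0 _
  have hx1 : x < 1 := pow_lt_one₀ h0.le h1 (Nat.succ_ne_zero p)
  have hgeo : Summable (fun k : ℕ => x ^ k) := summable_geometric_of_lt_one hx0.le hx1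
  have hs1 : Summable (fun k : ℕ => x^(2*k+1)/(2*(k:ℝ)+1)) := by
    refine Summable.of_nonneg_of_le (fun k => by positivity) (fun k => ?_) hgeo
    calc x^(2*k+1)/(2*(k:ℝ)+1) ≤ x^(2*k+1)/1 := by
          apply div_le_div_of_nonneg_left (by positivity) one_pos ?_ |>.trans_eq rfl
          push_cast; linarith [Nat.cast_nonneg (α := ℝ) k]
      _ = x^(2*k+1) := div_one _
      _ ≤ x^k := pow_le_pow_of_le_one hx0.le hx1.le (by omega)
  have hs2 : Summable (fun k : ℕ => x^(2*k+2)/(2*(k:ℝ)+2)) := by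
    refine Summable.of_nonneg_of_le (fun k => by positivity) (fun k => ?_) hgeo
    calc x^(2*k+2)/(2*(k:ℝ)+2) ≤ x^(2*k+2)/1 := by
          apply div_le_div_of_nonneg_left (by positivity) one_pos ?_ |>.trans_eq rfl
          push_cast; linarith [Nat.cast_nonneg (α := ℝ) k]
      _ = x^(2*k+2) := div_one _
      _ ≤ x^k := pow_le_pow_of_le_one hx0.le hx1.le (by omega)
  have hlog : HasSum (fun n : ℕ => (-x)^(n+1)/((n:ℝ)+1)) (-Real.log (1+x)) := by
    have habs : |(-x)| < 1 := by rw [abs_neg, abs_of_pos hx0]; exact hx1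
    have := hasSum_pow_div_log_of_abs_lt_one habs
    simpa [sub_neg_eq_add] using this
  obtain ⟨s1, hS1⟩ : ∃ s, HasSum (fun k : ℕ => x^(2*k+1)/(2*(k:ℝ)+1)) s := ⟨_, hs1.hasSum⟩
  obtain ⟨s2, hS2⟩ : ∃ s, HasSum (fun k : ℕ => x^(2*k+2)/(2*(k:ℝ)+2)) s := ⟨_, hs2.hasSum⟩
  have he : HasSum (fun k : ℕ => (-x)^(2*k+1)/(((2*k : ℕ):ℝ)+1)) (-s1) := by
    have := hS1.neg
    have heq : (fun k : ℕ => -(x^(2*k+1)/(2*(k:ℝ)+1)))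
        = fun k : ℕ => (-x)^(2*k+1)/(((2*k : ℕ):ℝ)+1) := by
      funext k
      rw [Odd.neg_pow ⟨k, by ring⟩]
      push_cast
      ring
    rwa [heq] at this
  have ho : HasSum (fun k : ℕ => (-x)^(2*k+1+1)/(((2*k+1 : ℕ):ℝ)+1)) s2 := by
    have := hS2
    have heq : (fun k : ℕ => x^(2*k+2)/(2*(k:ℝ)+2))
        = fun k : ℕ => (-x)^(2*k+1+1)/(((2*k+1 : ℕ):ℝ)+1) := by
      funext k
      rw [Even.neg_pow ⟨k+1, by ring⟩]
      push_cast
      ring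
    rwa [heq] at this
  have htot : HasSum (fun n : ℕ => (-x)^(n+1)/((n:ℝ)+1)) (-s1 + s2) :=
    HasSum.even_add_odd he ho
  have key : s1 - s2 = Real.log (1+x) := by
    have := hlog.unique htot
    linarith
  have hdiff := (hS1.sub hS2).div_const u
  rw [key] at hdiff
  have heq : (fun k : ℕ => (x^(2*k+1)/(2*(k:ℝ)+1) - x^(2*k+2)/(2*(k:ℝ)+2))/u)
      = fun k : ℕ => u^(2*(p+1)*k + p)/(2*(k:ℝ)+1) - u^(2*(p+1)*k + 2*p+1)/(2*(k:ℝ)+2) := by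
    funext k
    have e1 : x^(2*k+1) = u^(2*(p+1)*k + p) * u := by
      rw [hxdef, ← pow_mul, ← pow_succ]
      congr 1
      ring
    have e2 : x^(2*k+2) = u^(2*(p+1)*k + 2*p+1) * u := by
      rw [hxdef, ← pow_mul, ← pow_succ]
      congr 1
      ring
    rw [e1, e2]
    have h2k1 : (2*(k:ℝ)+1) ≠ 0 := by positivity
    have h2k2 : (2*(k:ℝ)+2) ≠ 0 := by positivity
    field_simp
  rwa [heq] at hdiff

lemma F_integral (p k : ℕ) :
    ∫ u in Set.Ioo (0:ℝ) 1, (u^(2*(p+1)*k + p)/(2*(k:ℝ)+1) - u^(2*(p+1)*k + 2*p+1)/(2*(k:ℝ)+2))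
      = (1/((p:ℝ)+1)) * (1/(2*(k:ℝ)+1)^2 - 1/(2*(k:ℝ)+2)^2) := by
  rw [← MeasureTheory.integral_Ioc_eq_integral_Ioo,
    ← intervalIntegral.integral_of_le (by norm_num : (0:ℝ) ≤ 1)]
  have h1 : IntervalIntegrable (fun u : ℝ => u^(2*(p+1)*k + p)/(2*(k:ℝ)+1)) volume 0 1 := by
    apply Continuous.intervalIntegrable; fun_prop
  have h2 : IntervalIntegrable (fun u : ℝ => u^(2*(p+1)*k + 2*p+1)/(2*(k:ℝ)+2)) volume 0 1 := by
    apply Continuous.intervalIntegrable; fun_prop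
  rw [intervalIntegral.integral_sub h1 h2]
  simp only [intervalIntegral.integral_div, integral_pow]
  have c1 : (2*(k:ℝ)+1) ≠ 0 := by positivity
  have c2 : (2*(k:ℝ)+2) ≠ 0 := by positivity
  have e1 : ((2*(p+1)*k + p : ℕ):ℝ) + 1 = ((p:ℝ)+1)*(2*(k:ℝ)+1) := by push_cast; ring
  have e2 : ((2*(p+1)*k + 2*p+1 : ℕ):ℝ) + 1 = ((p:ℝ)+1)*(2*(k:ℝ)+2) := by push_cast; ring
  rw [e1, e2]
  have hp : ((p:ℝ)+1) ≠ 0 := by positivity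
  field_simp
  ring

lemma log_int (p : ℕ) :
    ∫ u in (0:ℝ)..1, Real.log (1 + u^(p+1)) / u = Real.pi^2/(12*((p:ℝ)+1)) := by
  set F : ℕ → ℝ → ℝ := fun k u =>
    u^(2*(p+1)*k + p)/(2*(k:ℝ)+1) - u^(2*(p+1)*k + 2*p+1)/(2*(k:ℝ)+2) with hF
  have hFc : ∀ k, Continuous (F k) := by intro k; simp only [hF]; fun_prop
  have hFnn : ∀ k, ∀ u ∈ Set.Ioo (0:ℝ) 1, 0 ≤ F k u := by
    intro k u hu
    have h0 := hu.1
    have h1 := hu.2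
    simp only [hF]
    have hle : u^(2*(p+1)*k + 2*p+1) ≤ u^(2*(p+1)*k + p) :=
      pow_le_pow_of_le_one h0.le h1.le (by omega)
    have : u^(2*(p+1)*k + 2*p+1)/(2*(k:ℝ)+2) ≤ u^(2*(p+1)*k + p)/(2*(k:ℝ)+1) := by
      apply div_le_div₀ (by positivity) hle (by positivity) (by linarith)
    linarith
  have hFint : ∀ k, MeasureTheory.Integrable (F k) (volume.restrict (Set.Ioo (0:ℝ) 1)) := by
    intro k
    exact ((hFc k).integrableOn_Icc (a := 0) (b := 1)).mono_set Set.Ioo_subset_Icc_self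
  have hFnorm : ∀ k, ∫ u in Set.Ioo (0:ℝ) 1, ‖F k u‖
      = (1/((p:ℝ)+1)) * (1/(2*(k:ℝ)+1)^2 - 1/(2*(k:ℝ)+2)^2) := by
    intro k
    rw [← F_integral p k]
    apply MeasureTheory.setIntegral_congr_fun measurableSet_Ioo
    intro u hu
    exact Real.norm_of_nonneg (hFnn k u hu)
  have hsum : Summable (fun k : ℕ => ∫ u in Set.Ioo (0:ℝ) 1, ‖F k u‖) := by
    simp only [hFnorm]
    exact (alt_sq).summable.mul_left _
  have hswap := MeasureTheory.integral_tsum_of_summable_integral_norm hFint hsum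
  have hS : HasSum (fun k : ℕ => ∫ u in Set.Ioo (0:ℝ) 1, F k u) (Real.pi^2/(12*((p:ℝ)+1))) := by
    have := HasSum.mul_left (1/((p:ℝ)+1)) alt_sq
    have heq : (fun k : ℕ => (1/((p:ℝ)+1)) * (1/(2*(k:ℝ)+1)^2 - 1/(2*(k:ℝ)+2)^2))
        = fun k : ℕ => ∫ u in Set.Ioo (0:ℝ) 1, F k u := by
      funext k; rw [F_integral p k]
    rw [heq] at this
    rw [show Real.pi^2/(12*((p:ℝ)+1)) = 1/((p:ℝ)+1) * (Real.pi^2/12) by field_simp]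
    exact this
  have hval : (∑' k : ℕ, ∫ u in Set.Ioo (0:ℝ) 1, F k u) = Real.pi^2/(12*((p:ℝ)+1)) :=
    hS.tsum_eq
  rw [intervalIntegral.integral_of_le (by norm_num : (0:ℝ) ≤ 1),
    MeasureTheory.integral_Ioc_eq_integral_Ioo]
  rw [← hval, hswap]
  apply MeasureTheory.setIntegral_congr_fun measurableSet_Ioo
  intro u hu
  exact ((hasSum_F p hu.1 hu.2).tsum_eq).symm


lemma denom_pos (t : ℝ) : 0 < 1 - t + t^2 := by nlinarith [sq_nonneg (t - 1/2), sq_nonneg t]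

lemma log1t_integrable : IntervalIntegrable (fun t : ℝ => Real.log (1 - t)) volume 0 1 := by
  have hrpow : IntervalIntegrable (fun x : ℝ => x ^ (-(1/2) : ℝ)) volume 0 1 :=
    intervalIntegrable_rpow' (by norm_num)
  have hcomp : IntervalIntegrable (fun x : ℝ => (1 - x) ^ (-(1/2) : ℝ)) volume 0 1 := by
    have := hrpow.comp_sub_left 1
    simpa using this.symm
  have hg : IntervalIntegrable (fun x : ℝ => 2 * (1 - x) ^ (-(1/2) : ℝ)) volume 0 1 :=
    hcomp.const_mul 2
  refine hg.mono_fun ?_ ?_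
  · apply Measurable.aestronglyMeasurable
    exact Real.measurable_log.comp (by fun_prop)
  · rw [Filter.EventuallyLE, ae_restrict_iff' measurableSet_uIoc]
    apply Filter.Eventually.of_forall
    intro t ht
    rw [Set.uIoc_of_le (by norm_num : (0:ℝ) ≤ 1)] at ht
    obtain ⟨h0, h1⟩ := ht
    rcases eq_or_lt_of_le h1 with rfl | h1
    · norm_num
    · set s := 1 - t with hs
      have hs0 : 0 < s := by simp [hs]; linarith
      have hs1 : s < 1 := by simp [hs]; linarith
      have hlog : Real.log s < 0 := Real.log_neg hs0 hs1
      have hkey : -Real.log s ≤ 2 * s ^ (-(1/2) : ℝ) := by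
        have h2 : Real.log (s ^ (-(1/2) : ℝ)) = -(1/2) * Real.log s := Real.log_rpow hs0 _
        have h3 : Real.log (s ^ (-(1/2) : ℝ)) ≤ s ^ (-(1/2) : ℝ) - 1 :=
          Real.log_le_sub_one_of_pos (Real.rpow_pos_of_pos hs0 _)
        have h4 : (0:ℝ) < s ^ (-(1/2) : ℝ) := Real.rpow_pos_of_pos hs0 _
        nlinarith
      have e1 : ‖Real.log s‖ = -Real.log s := by
        rw [Real.norm_eq_abs, abs_of_neg hlog]
      have e2 : ‖2 * s ^ (-(1/2) : ℝ)‖ = 2 * s ^ (-(1/2) : ℝ) := by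
        rw [Real.norm_of_nonneg]
        positivity
      show ‖Real.log s‖ ≤ ‖2 * s ^ (-(1/2) : ℝ)‖
      rw [e1, e2]
      exact hkey

lemma bounded_intervalIntegrable (f : ℝ → ℝ) (hm : Measurable f) (C : ℝ)
    (hb : ∀ t ∈ Set.Ioc (0:ℝ) 1, ‖f t‖ ≤ C) : IntervalIntegrable f volume 0 1 := by
  rw [intervalIntegrable_iff_integrableOn_Ioc_of_le (by norm_num : (0:ℝ) ≤ 1)]
  apply Measure.integrableOn_of_bounded (M := C)
  · rw [Real.volume_Ioc]; exact ENNReal.ofReal_ne_top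
  · exact hm.aestronglyMeasurable
  · rw [ae_restrict_iff' measurableSet_Ioc]
    exact Filter.Eventually.of_forall hb

lemma h_bound : ∀ t ∈ Set.Ioc (0:ℝ) 1, ‖Real.log (1 - t + t^2) / (1 - t)‖ ≤ 2 := by
  intro t ht
  obtain ⟨h0, h1⟩ := ht
  rcases eq_or_lt_of_le h1 with rfl | h1
  · norm_num
  · have hd := denom_pos t
    have hd1 : 1 - t + t^2 ≤ 1 := by nlinarith
    have hlog_le : Real.log (1 - t + t^2) ≤ 0 := Real.log_nonpos (by linarith) hd1
    have hkey : -Real.log (1 - t + t^2) ≤ 2 * (1 - t) := by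
      have h2 : Real.log ((1 - t + t^2)⁻¹) ≤ (1 - t + t^2)⁻¹ - 1 :=
        Real.log_le_sub_one_of_pos (by positivity)
      rw [Real.log_inv] at h2
      have h3 : (1 - t + t^2)⁻¹ - 1 = (t - t^2) / (1 - t + t^2) := by
        field_simp
        ring
      have h4 : (t - t^2) / (1 - t + t^2) ≤ 2 * (1 - t) := by
        rw [div_le_iff₀ hd]
        have h34 : (3:ℝ)/4 ≤ 1 - t + t^2 := by nlinarith [sq_nonneg (t - 1/2)]
        nlinarith
      linarith [h2, h3 ▸ h2]
    rw [norm_div, Real.norm_eq_abs, Real.norm_eq_abs, abs_of_nonpos hlog_le,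
      abs_of_pos (by linarith : (0:ℝ) < 1 - t), div_le_iff₀ (by linarith : (0:ℝ) < 1 - t)]
    linarith

lemma h_integrable : IntervalIntegrable (fun t : ℝ => Real.log (1 - t + t^2) / (1 - t)) volume 0 1 := by
  apply bounded_intervalIntegrable _ ?_ 2 h_bound
  exact (Real.measurable_log.comp (by fun_prop)).div (by fun_prop)

lemma logm_bound (m : ℕ) (hm : 0 < m) : ∀ t ∈ Set.Ioc (0:ℝ) 1, ‖Real.log (1 + t^m) / t‖ ≤ 1 := by
  intro t ht
  obtain ⟨h0, h1⟩ := ht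
  have hp : (0:ℝ) < 1 + t^m := by positivity
  have hnn : 0 ≤ Real.log (1 + t^m) := Real.log_nonneg (by nlinarith [pow_pos h0 m])
  have hub : Real.log (1 + t^m) ≤ t^m := by
    have := Real.log_le_sub_one_of_pos hp
    linarith
  rw [norm_div, Real.norm_eq_abs, Real.norm_eq_abs, abs_of_nonneg hnn, abs_of_pos h0,
    div_le_one h0]
  calc Real.log (1 + t^m) ≤ t^m := hub
    _ ≤ t := by
      calc t^m ≤ t^1 := pow_le_pow_of_le_one h0.le h1 hm
        _ = t := pow_one t

lemma logm_integrable (m : ℕ) (hm : 0 < m) :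
    IntervalIntegrable (fun t : ℝ => Real.log (1 + t^m) / t) volume 0 1 := by
  apply bounded_intervalIntegrable _ ?_ 1 (logm_bound m hm)
  exact (Real.measurable_log.comp (by fun_prop)).div (by fun_prop)

lemma J_split (hlog1 : ∫ u in (0:ℝ)..1, Real.log (1 + u^1) / u = Real.pi^2/12)
    (hlog3 : ∫ u in (0:ℝ)..1, Real.log (1 + u^3) / u = Real.pi^2/36) :
    ∫ u in (0:ℝ)..1, Real.log (1 - u + u^2) / u = -(Real.pi^2/18) := by
  have key : ∀ u ∈ Set.uIcc (0:ℝ) 1,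
      Real.log (1 - u + u^2) / u = Real.log (1 + u^3) / u - Real.log (1 + u^1) / u := by
    intro u hu
    rw [Set.uIcc_of_le (by norm_num : (0:ℝ) ≤ 1)] at hu
    rcases eq_or_lt_of_le hu.1 with rfl | h0
    · norm_num
    · have h1u : (0:ℝ) < 1 + u := by linarith
      have hd : (0:ℝ) < 1 - u + u^2 := denom_pos u
      have hfact : 1 - u + u^2 = (1 + u^3) / (1 + u) := by
        field_simp
        ring
      rw [hfact, Real.log_div (by positivity) (by positivity), pow_one]
      ring
  rw [intervalIntegral.integral_congr key,
    intervalIntegral.integral_sub (logm_integrable 3 (by norm_num)) (logm_integrable 1 (by norm_num)),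
    hlog1, hlog3]
  ring

lemma h_subst :
    ∫ t in (0:ℝ)..1, Real.log (1 - t + t^2) / (1 - t)
      = ∫ u in (0:ℝ)..1, Real.log (1 - u + u^2) / u := by
  have := intervalIntegral.integral_comp_sub_left (a := 0) (b := 1)
    (fun u : ℝ => Real.log (1 - u + u^2) / u) 1
  simp only [sub_zero, sub_self] at this
  rw [← this]
  apply intervalIntegral.integral_congr
  intro t _
  simp only
  rw [show 1 - (1 - t) + (1 - t)^2 = 1 - t + t^2 by ring]

lemma f_integrable :
    IntervalIntegrable (fun t : ℝ => (1 - 2 * t) * Real.log (1 - t) / (1 - t + t ^ 2)) volume 0 1 := by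
  have heq : (fun t : ℝ => (1 - 2 * t) * Real.log (1 - t) / (1 - t + t ^ 2))
      = fun t => ((1 - 2*t)/(1 - t + t^2)) * Real.log (1 - t) := by
    funext t; ring
  rw [heq]
  apply log1t_integrable.continuousOn_mul
  exact ContinuousOn.div (by fun_prop) (by fun_prop) (fun t _ => (denom_pos t).ne')

lemma G_deriv (t : ℝ) (ht : t < 1) :
    HasDerivAt (fun t : ℝ => -(Real.log (1 - t + t^2) * Real.log (1 - t)))
      ((1 - 2 * t) * Real.log (1 - t) / (1 - t + t ^ 2) + Real.log (1 - t + t^2) / (1 - t)) t := by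
  have hd := denom_pos t
  have h1t : (0:ℝ) < 1 - t := by linarith
  have hpoly : HasDerivAt (fun t : ℝ => 1 - t + t^2) (-1 + 2*t) t := by
    have h := ((hasDerivAt_id t).const_sub 1).add (hasDerivAt_pow 2 t)
    exact h.congr_deriv (by norm_num)
  have hlog1 : HasDerivAt (fun t : ℝ => Real.log (1 - t + t^2)) ((-1 + 2*t)/(1 - t + t^2)) t :=
    hpoly.log hd.ne'
  have hlin : HasDerivAt (fun t : ℝ => 1 - t) (-1) t := by
    simpa using (hasDerivAt_id t).const_sub 1
  have hlog2 : HasDerivAt (fun t : ℝ => Real.log (1 - t)) (-1/(1 - t)) t :=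
    hlin.log h1t.ne'
  have hmul := (hlog1.mul hlog2).neg
  refine hmul.congr_deriv ?_
  field_simp
  ring

lemma partial_eq (a : ℝ) (ha : a ∈ Set.Ioo (0:ℝ) 1) :
    ∫ t in (0:ℝ)..a, (1 - 2 * t) * Real.log (1 - t) / (1 - t + t ^ 2)
      = -(Real.log (1 - a + a^2) * Real.log (1 - a))
        - ∫ t in (0:ℝ)..a, Real.log (1 - t + t^2) / (1 - t) := by
  obtain ⟨ha0, ha1⟩ := ha
  have huIcc : Set.uIcc (0:ℝ) a = Set.Icc 0 a := Set.uIcc_of_le ha0.le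
  have hlt : ∀ t ∈ Set.uIcc (0:ℝ) a, t < 1 := by
    intro t htm
    rw [huIcc] at htm
    exact lt_of_le_of_lt htm.2 ha1
  have hcnelog : ∀ t ∈ Set.uIcc (0:ℝ) a, (1:ℝ) - t ≠ 0 := by
    intro t htm
    have := hlt t htm
    intro hcon
    nlinarith
  have hclog : ContinuousOn (fun t : ℝ => Real.log (1 - t)) (Set.uIcc (0:ℝ) a) :=
    ContinuousOn.log (by fun_prop) hcnelog
  have hcf : ContinuousOn (fun t : ℝ => (1 - 2 * t) * Real.log (1 - t) / (1 - t + t ^ 2))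
      (Set.uIcc (0:ℝ) a) :=
    ContinuousOn.div ((Continuous.continuousOn (by fun_prop)).mul hclog) (by fun_prop)
      (fun t _ => (denom_pos t).ne')
  have hch : ContinuousOn (fun t : ℝ => Real.log (1 - t + t^2) / (1 - t))
      (Set.uIcc (0:ℝ) a) :=
    ContinuousOn.div (ContinuousOn.log (by fun_prop) (fun t _ => (denom_pos t).ne'))
      (by fun_prop) hcnelog
  have hderiv : ∀ t ∈ Set.uIcc (0:ℝ) a,
      HasDerivAt (fun t : ℝ => -(Real.log (1 - t + t^2) * Real.log (1 - t)))
        ((1 - 2 * t) * Real.log (1 - t) / (1 - t + t ^ 2) + Real.log (1 - t + t^2) / (1 - t)) t :=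
    fun t htm => G_deriv t (hlt t htm)
  have hint : IntervalIntegrable
      (fun t : ℝ => (1 - 2 * t) * Real.log (1 - t) / (1 - t + t ^ 2)
        + Real.log (1 - t + t^2) / (1 - t)) volume 0 a :=
    (hcf.add hch).intervalIntegrable
  have hftc := intervalIntegral.integral_eq_sub_of_hasDerivAt hderiv hint
  rw [intervalIntegral.integral_add hcf.intervalIntegrable hch.intervalIntegrable] at hftc
  norm_num at hftc
  linarith

lemma map_Ioo_to_pos : Filter.Tendsto (fun a : ℝ => 1 - a)
    (nhdsWithin 1 (Set.Ioo (0:ℝ) 1)) (nhdsWithin 0 (Set.Ioi (0:ℝ))) := by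
  apply tendsto_nhdsWithin_of_tendsto_nhds_of_eventually_within
  · have hc : Continuous (fun a : ℝ => 1 - a) := by fun_prop
    have h2 := hc.tendsto 1
    norm_num at h2
    exact h2.mono_left nhdsWithin_le_nhds
  · filter_upwards [self_mem_nhdsWithin] with a ha
    exact Set.mem_Ioi.mpr (by linarith [ha.2])

lemma map_Ioo_to_ne : Filter.Tendsto (fun a : ℝ => 1 - a)
    (nhdsWithin 1 (Set.Ioo (0:ℝ) 1)) (nhdsWithin 0 {x : ℝ | x ≠ 0}) := by
  apply map_Ioo_to_pos.mono_right
  apply nhdsWithin_mono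
  intro x hx
  exact (Set.mem_Ioi.mp hx).ne'

lemma G_tendsto : Filter.Tendsto (fun a : ℝ => -(Real.log (1 - a + a^2) * Real.log (1 - a)))
    (nhdsWithin 1 (Set.Ioo (0:ℝ) 1)) (nhds 0) := by
  have hA : Filter.Tendsto (fun a : ℝ => Real.log (1 - a + a^2) / (1 - a))
      (nhdsWithin 1 (Set.Ioo (0:ℝ) 1)) (nhds (-1)) := by
    have hpoly : HasDerivAt (fun s : ℝ => 1 - s + s^2) (-1 + 2*0) 0 := by
      have h := ((hasDerivAt_id (0:ℝ)).const_sub 1).add (hasDerivAt_pow 2 0)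
      exact h.congr_deriv (by norm_num)
    have hψ : HasDerivAt (fun s : ℝ => Real.log (1 - s + s^2)) (-1) 0 := by
      have := hpoly.log (by norm_num : (1:ℝ) - 0 + 0^2 ≠ 0)
      norm_num at this
      exact this
    have hslope := hasDerivAt_iff_tendsto_slope.mp hψ
    have hcomp := hslope.comp map_Ioo_to_ne
    apply hcomp.congr'
    filter_upwards [self_mem_nhdsWithin] with a ha
    have h1a : (1:ℝ) - a ≠ 0 := by have := ha.2; intro hc; nlinarith
    simp only [Function.comp_apply, slope_def_field]
    rw [show (1:ℝ) - (1-a) + (1-a)^2 = 1 - a + a^2 by ring]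
    norm_num
  have hB : Filter.Tendsto (fun a : ℝ => (1 - a) * Real.log (1 - a))
      (nhdsWithin 1 (Set.Ioo (0:ℝ) 1)) (nhds 0) := by
    have hbase := tendsto_log_mul_rpow_nhdsGT_zero (one_pos)
    have hbase' : Filter.Tendsto (fun x : ℝ => Real.log x * x)
        (nhdsWithin 0 (Set.Ioi (0:ℝ))) (nhds 0) := by
      apply hbase.congr'
      filter_upwards [self_mem_nhdsWithin] with x _
      rw [Real.rpow_one]
    have hcomp := hbase'.comp map_Ioo_to_pos
    apply hcomp.congr
    intro a
    simp only [Function.comp_apply]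
    ring
  have hAB := (hA.mul hB).neg
  simp only [neg_mul, mul_zero, neg_zero] at hAB
  apply hAB.congr'
  filter_upwards [self_mem_nhdsWithin] with a ha
  have h1a : (1:ℝ) - a ≠ 0 := by have := ha.2; intro hc; nlinarith
  field_simp

lemma I_eq_negH :
    ∫ t in (0:ℝ)..1, (1 - 2 * t) * Real.log (1 - t) / (1 - t + t ^ 2)
      = -(∫ t in (0:ℝ)..1, Real.log (1 - t + t^2) / (1 - t)) := by
  haveI hnb : (nhdsWithin (1:ℝ) (Set.Ioo (0:ℝ) 1)).NeBot :=
    right_nhdsWithin_Ioo_neBot (by norm_num)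
  have hmono : nhdsWithin (1:ℝ) (Set.Ioo (0:ℝ) 1) ≤ nhdsWithin 1 (Set.uIcc (0:ℝ) 1) := by
    apply nhdsWithin_mono
    rw [Set.uIcc_of_le (by norm_num : (0:ℝ) ≤ 1)]
    exact Set.Ioo_subset_Icc_self
  have hT1 : Filter.Tendsto
      (fun a : ℝ => ∫ t in (0:ℝ)..a, (1 - 2 * t) * Real.log (1 - t) / (1 - t + t ^ 2))
      (nhdsWithin 1 (Set.Ioo (0:ℝ) 1))
      (nhds (∫ t in (0:ℝ)..1, (1 - 2 * t) * Real.log (1 - t) / (1 - t + t ^ 2))) := by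
    have hc := intervalIntegral.continuousOn_primitive_interval' f_integrable
      (Set.left_mem_uIcc (a := (0:ℝ)) (b := 1))
    have hcw := hc 1 (Set.right_mem_uIcc)
    exact hcw.tendsto.mono_left hmono
  have hT2 : Filter.Tendsto
      (fun a : ℝ => ∫ t in (0:ℝ)..a, Real.log (1 - t + t^2) / (1 - t))
      (nhdsWithin 1 (Set.Ioo (0:ℝ) 1))
      (nhds (∫ t in (0:ℝ)..1, Real.log (1 - t + t^2) / (1 - t))) := by
    have hc := intervalIntegral.continuousOn_primitive_interval' h_integrable
      (Set.left_mem_uIcc (a := (0:ℝ)) (b := 1))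
    have hcw := hc 1 (Set.right_mem_uIcc)
    exact hcw.tendsto.mono_left hmono
  have hRHS := G_tendsto.sub hT2
  have hE : Filter.Tendsto
      (fun a : ℝ => ∫ t in (0:ℝ)..a, (1 - 2 * t) * Real.log (1 - t) / (1 - t + t ^ 2))
      (nhdsWithin 1 (Set.Ioo (0:ℝ) 1))
      (nhds (0 - ∫ t in (0:ℝ)..1, Real.log (1 - t + t^2) / (1 - t))) := by
    apply hRHS.congr'
    filter_upwards [self_mem_nhdsWithin] with a ha
    exact (partial_eq a ha).symm
  have := tendsto_nhds_unique hT1 hE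
  rw [this]
  ring

/-- `∫₀¹ (1−2t)·log(1−t)/(1−t+t²) dt = π²/18`. -/
theorem stmt_16 :
    ∫ t in (0:ℝ)..1, (1 - 2 * t) * Real.log (1 - t) / (1 - t + t ^ 2) =
      Real.pi ^ 2 / 18 := by
  have h1 : ∫ u in (0:ℝ)..1, Real.log (1 + u^1) / u = Real.pi^2/12 := by
    have := log_int 0
    norm_num at this ⊢
    convert this using 1
  have h3 : ∫ u in (0:ℝ)..1, Real.log (1 + u^3) / u = Real.pi^2/36 := by
    have := log_int 2
    norm_num at this ⊢
    convert this using 1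
  rw [I_eq_negH, h_subst, J_split h1 h3]
  ring
end

section
/- The series Σ_{n=1}^∞ (−1)^{n−1}·(log 2 − H_{2n} + H_n) converges and its sum equals (3/4)·log 2 − π/8. -/
open Filter Topology

/-- The `n`-th harmonic number `Hₙ = Σ_{j=1}^n 1/j`. -/
noncomputable def H (n : ℕ) : ℝ := ∑ j ∈ Finset.range n, 1 / ((j : ℝ) + 1)

lemma H_eq (n : ℕ) : H n = (harmonic n : ℝ) := by
  simp [H, harmonic, one_div]

lemma H_succ (n : ℕ) : H (n + 1) = H n + 1 / ((n : ℝ) + 1) := by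
  simp [H, Finset.sum_range_succ]

noncomputable def D (m : ℕ) : ℝ := H (2 * m) - H m

lemma D_succ (m : ℕ) :
    D (m + 1) = D m + 1 / (2 * (m : ℝ) + 1) - 1 / (2 * (m : ℝ) + 2) := by
  have h2 : 2 * (m + 1) = (2 * m) + 1 + 1 := by ring
  rw [D, D, h2, H_succ, H_succ, H_succ]
  have h1 : (m : ℝ) + 1 ≠ 0 := by positivity
  have h3 : 2 * (m : ℝ) + 1 ≠ 0 := by positivity
  have h4 : 2 * (m : ℝ) + 2 ≠ 0 := by positivity
  have h5 : ((2 * m : ℕ) : ℝ) = 2 * (m : ℝ) := by push_cast; ring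
  have h6 : ((2 * m + 1 : ℕ) : ℝ) = 2 * (m : ℝ) + 1 := by push_cast; ring
  rw [h5, h6]
  field_simp
  ring

noncomputable def W (m : ℕ) : ℝ :=
  ∑ t ∈ Finset.range m, (-1 : ℝ) ^ t * (1 / (2 * (t : ℝ) + 1) - 1 / (2 * (t : ℝ) + 2))

noncomputable def S (k : ℕ) : ℝ := ∑ j ∈ Finset.range k, (-1 : ℝ) ^ j / ((j : ℝ) + 1)

lemma key (m : ℕ) :
    ∑ n ∈ Finset.range m, (-1 : ℝ) ^ n * (Real.log 2 - H (2 * (n + 1)) + H (n + 1))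
      = (1 / 2) * (Real.log 2 - W m) + ((-1 : ℝ) ^ m / 2) * (D m - Real.log 2) := by
  induction m with
  | zero => simp [W, D, H]
  | succ m ih =>
    rw [Finset.sum_range_succ, ih]
    have hD : H (2 * (m + 1)) - H (m + 1) = D (m + 1) := rfl
    have : Real.log 2 - H (2 * (m + 1)) + H (m + 1) = Real.log 2 - D (m + 1) := by
      rw [← hD]; ring
    have hW : W (m + 1) = W m
        + (-1 : ℝ) ^ m * (1 / (2 * (m : ℝ) + 1) - 1 / (2 * (m : ℝ) + 2)) := by
      rw [W, Finset.sum_range_succ, ← W]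
    rw [this, D_succ, hW, pow_succ]
    ring

lemma tendsto_D : Tendsto D atTop (𝓝 (Real.log 2)) := by
  have h2 : Tendsto (fun m : ℕ => 2 * m) atTop atTop :=
    tendsto_atTop_atTop_of_monotone (fun a b h => by omega) (fun b => ⟨b, by omega⟩)
  have h := Real.tendsto_harmonic_sub_log
  have h' := ((h.comp h2).sub h).add (tendsto_const_nhds (x := Real.log 2))
  have : Real.eulerMascheroniConstant - Real.eulerMascheroniConstant + Real.log 2 = Real.log 2 := by ring
  rw [this] at h'
  apply h'.congr'
  filter_upwards [eventually_ge_atTop 1] with m hm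
  have hm0 : (0 : ℝ) < (m : ℝ) := by exact_mod_cast hm
  simp only [Function.comp]
  rw [D, H_eq, H_eq]
  have hc : ((2 * m : ℕ) : ℝ) = 2 * (m : ℝ) := by push_cast; ring
  rw [hc, Real.log_mul two_ne_zero hm0.ne']
  ring

lemma S_even (m : ℕ) : S (2 * m) = D m := by
  induction m with
  | zero => simp [S, D, H]
  | succ m ih =>
    have h2 : 2 * (m + 1) = (2 * m) + 1 + 1 := by ring
    rw [h2, S, Finset.sum_range_succ, Finset.sum_range_succ, ← S, ih, D_succ]
    have e1 : (-1 : ℝ) ^ (2 * m) = 1 := by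
      rw [pow_mul]; norm_num
    have e2 : (-1 : ℝ) ^ (2 * m + 1) = -1 := by
      rw [pow_succ, e1]; norm_num
    rw [e1, e2]
    push_cast
    ring

lemma tendsto_S : Tendsto S atTop (𝓝 (Real.log 2)) := by
  rw [tendsto_iff_norm_sub_tendsto_zero]
  have hdiv : Tendsto (fun m : ℕ => m / 2) atTop atTop :=
    tendsto_atTop_atTop_of_monotone (fun a b h => Nat.div_le_div_right h)
      (fun b => ⟨2 * b, by omega⟩)
  have hD0 : Tendsto (fun m : ℕ => |D (m / 2) - Real.log 2|) atTop (𝓝 0) := by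
    have := (tendsto_D.comp hdiv).sub (tendsto_const_nhds (x := Real.log 2))
    rw [sub_self] at this
    simpa using this.abs
  have hfrac : Tendsto (fun m : ℕ => 2 / ((m : ℝ) + 1)) atTop (𝓝 0) := by
    have := tendsto_one_div_add_atTop_nhds_zero_nat (𝕜 := ℝ)
    have h2 := this.const_mul (2 : ℝ)
    simpa [mul_one_div, div_eq_mul_inv] using h2
  have hsum := hD0.add hfrac
  rw [add_zero] at hsum
  apply squeeze_zero (fun n => norm_nonneg _) _ hsum
  intro m
  rcases Nat.even_or_odd m with ⟨k, hk⟩ | ⟨k, hk⟩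
  · subst hk
    have : (k + k) / 2 = k := by omega
    rw [this]
    have : S (k + k) = D k := by rw [← S_even]; congr 1; omega
    rw [this]
    have : (0:ℝ) ≤ 2 / (((k + k : ℕ) : ℝ) + 1) := by positivity
    calc ‖D k - Real.log 2‖ = |D k - Real.log 2| := rfl
      _ ≤ |D k - Real.log 2| + 2 / (((k + k : ℕ) : ℝ) + 1) := by
          nlinarith [this]
  · subst hk
    have hdv : (2 * k + 1) / 2 = k := by omega
    rw [hdv]
    have hS : S (2 * k + 1) = D k + 1 / (2 * (k : ℝ) + 1) := by
      rw [S, Finset.sum_range_succ, ← S, S_even]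
      have e1 : (-1 : ℝ) ^ (2 * k) = 1 := by rw [pow_mul]; norm_num
      rw [e1]
      push_cast
      ring
    rw [hS]
    have hb : 1 / (2 * (k : ℝ) + 1) ≤ 2 / (((2 * k + 1 : ℕ) : ℝ) + 1) := by
      have : ((2 * k + 1 : ℕ) : ℝ) = 2 * (k : ℝ) + 1 := by push_cast; ring
      rw [this, div_le_div_iff₀ (by positivity) (by positivity)]
      nlinarith [Nat.cast_nonneg (α := ℝ) k]
    calc ‖D k + 1 / (2 * (k : ℝ) + 1) - Real.log 2‖
        ≤ |D k - Real.log 2| + |1 / (2 * (k : ℝ) + 1)| := by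
          rw [Real.norm_eq_abs]
          have := abs_add_le (D k - Real.log 2) (1 / (2 * (k : ℝ) + 1))
          calc |D k + 1 / (2 * (k : ℝ) + 1) - Real.log 2|
              = |(D k - Real.log 2) + 1 / (2 * (k : ℝ) + 1)| := by ring_nf
            _ ≤ _ := this
      _ ≤ |D k - Real.log 2| + 2 / (((2 * k + 1 : ℕ) : ℝ) + 1) := by
          have : |1 / (2 * (k : ℝ) + 1)| = 1 / (2 * (k : ℝ) + 1) := by
            rw [abs_of_nonneg]; positivity
          rw [this]; linarith [hb]

lemma W_eq (m : ℕ) :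
    W m = (∑ t ∈ Finset.range m, (-1 : ℝ) ^ t / (2 * (t : ℝ) + 1)) - (1 / 2) * S m := by
  rw [S, W, Finset.mul_sum, ← Finset.sum_sub_distrib]
  refine Finset.sum_congr rfl fun t _ => ?_
  have h1 : 2 * (t : ℝ) + 1 ≠ 0 := by positivity
  have h2 : 2 * (t : ℝ) + 2 ≠ 0 := by positivity
  have h3 : (t : ℝ) + 1 ≠ 0 := by positivity
  field_simp

lemma tendsto_W : Tendsto W atTop (𝓝 (Real.pi / 4 - (1 / 2) * Real.log 2)) := by
  have hl := Real.tendsto_sum_pi_div_four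
  have hs := tendsto_S.const_mul (1 / 2 : ℝ)
  have := hl.sub hs
  apply this.congr fun m => (W_eq m).symm

/-- The series `Σ_{n=1}^∞ (−1)^{n−1}(log 2 − H_{2n} + H_n)` converges,
with sum `(3/4)·log 2 − π/8`. -/
theorem stmt_17 :
    Tendsto (fun m => ∑ n ∈ Finset.range m,
        (-1 : ℝ) ^ n * (Real.log 2 - H (2 * (n + 1)) + H (n + 1)))
      atTop
      (𝓝 ((3 / 4) * Real.log 2 - Real.pi / 8)) := by
  have h1 : Tendsto (fun m => (1 / 2) * (Real.log 2 - W m)) atTop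
      (𝓝 ((1 / 2) * (Real.log 2 - (Real.pi / 4 - (1 / 2) * Real.log 2)))) :=
    (tendsto_const_nhds.sub tendsto_W).const_mul _
  have h2 : Tendsto (fun m : ℕ => ((-1 : ℝ) ^ m / 2) * (D m - Real.log 2)) atTop (𝓝 0) := by
    have hg : Tendsto (fun m : ℕ => |D m - Real.log 2|) atTop (𝓝 0) := by
      have := tendsto_D.sub (tendsto_const_nhds (x := Real.log 2))
      rw [sub_self] at this
      simpa using this.abs
    apply squeeze_zero_norm _ hg
    intro m
    rw [norm_mul, Real.norm_eq_abs, Real.norm_eq_abs, abs_div, abs_pow, abs_neg, abs_one,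
      one_pow]
    calc 1 / |(2:ℝ)| * |D m - Real.log 2| = (1/2) * |D m - Real.log 2| := by norm_num
      _ ≤ |D m - Real.log 2| := by
        have := abs_nonneg (D m - Real.log 2); linarith
  have h := h1.add h2
  rw [add_zero] at h
  have heq : (1 / 2) * (Real.log 2 - (Real.pi / 4 - (1 / 2) * Real.log 2))
      = (3 / 4) * Real.log 2 - Real.pi / 8 := by ring
  rw [heq] at h
  apply h.congr fun m => (key m).symm
end
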